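/- arXiv:1711.05069 — 2 statements merged into one kernel-verified Lean document; each statement's English description precedes it below -/
import Mathlib

section
/- Let β ∈ (0,1) and ε ∈ (0, β). Suppose (r_n)_{n≥1} are nonnegative reals with ∑_{j≥n} r_j ≤ C·n^{-β} for all n ≥ 1. Then there is a constant C' > 0 such that for all u ∈ (0,1), ∑_{n≥1} n^{1+ε}·r_n·e^{-un} ≤ C'·u^{β−ε−1}. -/
open Finset Real

private lemma tailFin (r : ℕ → ℝ) (hr : ∀ n, 0 ≤ r n) (hsum : Summable r)
    (n N : ℕ) : ∑ m ∈ Finset.Ico n N, r m ≤ ∑' j : ℕ, r (n + j) := by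
  have hs : Summable (fun j => r (n + j)) := by
    have := (summable_nat_add_iff (f := r) n).2 hsum
    simpa [Nat.add_comm] using this
  calc ∑ m ∈ Finset.Ico n N, r m
      = ∑ j ∈ Finset.range (N - n), r (n + j) := Finset.sum_Ico_eq_sum_range _ _ _
    _ ≤ ∑' j : ℕ, r (n + j) := hs.sum_le_tsum _ (fun j _ => hr _)

private lemma blocks (g : ℕ → ℝ) (N : ℕ) :
    ∑ m ∈ Finset.Ico 1 (2^N), g m
      = ∑ k ∈ Finset.range N, ∑ m ∈ Finset.Ico (2^k) (2^(k+1)), g m := by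
  induction N with
  | zero => simp
  | succ n ih =>
    rw [Finset.sum_range_succ, ← ih,
      Finset.sum_Ico_consecutive _ Nat.one_le_two_pow
        (Nat.pow_le_pow_right (by norm_num) (Nat.le_succ n))]


private lemma step2 {a : ℝ} (ha : 0 < a) (ha1 : a ≤ 1) {u : ℝ} (hu : 0 < u) (hu1 : u < 1)
    (N : ℕ) :
    ∑ k ∈ Finset.range N, ((2:ℝ)^k)^a * Real.exp (-(u * 2^k))
      ≤ (2/((2:ℝ)^a - 1) + 4) * u^(-a) := by
  set q : ℝ := (2:ℝ)^a with hq
  have hq1 : 1 < q := by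
    have : (2:ℝ)^(0:ℝ) < (2:ℝ)^a := (Real.rpow_lt_rpow_left_iff (by norm_num)).2 ha
    simpa using this
  have hq2 : q ≤ 2 := by
    have : (2:ℝ)^a ≤ (2:ℝ)^(1:ℝ) := Real.rpow_le_rpow_of_exponent_le (by norm_num) ha1
    simpa using this
  have hinv1 : 1 ≤ u⁻¹ := by
    rw [le_inv_comm₀ one_pos hu]; simpa using hu1.le
  set K : ℕ := Nat.log 2 ⌊u⁻¹⌋₊ with hK
  have hfl : 1 ≤ ⌊u⁻¹⌋₊ := (Nat.one_le_floor_iff _).2 hinv1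
  have h1 : (2:ℝ)^K ≤ u⁻¹ := by
    have h := Nat.pow_log_le_self 2 (by omega : ⌊u⁻¹⌋₊ ≠ 0)
    have h2 : ((2^K : ℕ) : ℝ) ≤ (⌊u⁻¹⌋₊ : ℝ) := by exact_mod_cast h
    calc (2:ℝ)^K = ((2^K : ℕ) : ℝ) := by push_cast; ring
      _ ≤ (⌊u⁻¹⌋₊ : ℝ) := h2
      _ ≤ u⁻¹ := Nat.floor_le (by positivity)
  have h2 : u⁻¹ < (2:ℝ)^(K+1) := by
    have h := Nat.lt_pow_succ_log_self (by norm_num : 1 < 2) ⌊u⁻¹⌋₊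
    have h3 : ⌊u⁻¹⌋₊ + 1 ≤ 2^(K+1) := h
    have h4 : u⁻¹ < (⌊u⁻¹⌋₊ : ℝ) + 1 := Nat.lt_floor_add_one _
    calc u⁻¹ < (⌊u⁻¹⌋₊ : ℝ) + 1 := h4
      _ ≤ ((2^(K+1) : ℕ) : ℝ) := by exact_mod_cast h3
      _ = (2:ℝ)^(K+1) := by norm_num
  have hu2K : 1 ≤ u * 2^(K+1) := by
    have := (inv_lt_iff_one_lt_mul₀ hu).1 h2
    linarith [this]
  have hKa : ((2:ℝ)^K)^a ≤ u^(-a) := by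
    rw [Real.rpow_neg hu.le, ← Real.inv_rpow hu.le]
    exact Real.rpow_le_rpow (by positivity) h1 ha.le
  have hnonneg : ∀ k : ℕ, 0 ≤ ((2:ℝ)^k)^a * Real.exp (-(u * 2^k)) := by
    intro k; positivity
  set M : ℕ := max N (K+1) with hM
  have hsub : ∑ k ∈ Finset.range N, ((2:ℝ)^k)^a * Real.exp (-(u * 2^k))
      ≤ ∑ k ∈ Finset.range M, ((2:ℝ)^k)^a * Real.exp (-(u * 2^k)) :=
    Finset.sum_le_sum_of_subset_of_nonneg
      (Finset.range_subset_range.2 (le_max_left _ _)) (fun k _ _ => hnonneg k)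
  have hsplit : ∑ k ∈ Finset.range M, ((2:ℝ)^k)^a * Real.exp (-(u * 2^k))
      = ∑ k ∈ Finset.range (K+1), ((2:ℝ)^k)^a * Real.exp (-(u * 2^k))
        + ∑ k ∈ Finset.Ico (K+1) M, ((2:ℝ)^k)^a * Real.exp (-(u * 2^k)) :=
    (Finset.sum_range_add_sum_Ico _ (le_max_right _ _)).symm
  -- part 1
  have hqk : ∀ k : ℕ, ((2:ℝ)^k)^a = q^k := by
    intro k
    rw [hq, ← Real.rpow_natCast 2 k, ← Real.rpow_natCast ((2:ℝ)^a) k,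
      ← Real.rpow_mul (by norm_num), ← Real.rpow_mul (by norm_num), mul_comm]
  have part1 : ∑ k ∈ Finset.range (K+1), ((2:ℝ)^k)^a * Real.exp (-(u * 2^k))
      ≤ 2/(q-1) * u^(-a) := by
    have step : ∑ k ∈ Finset.range (K+1), ((2:ℝ)^k)^a * Real.exp (-(u * 2^k))
        ≤ ∑ k ∈ Finset.range (K+1), q^k := by
      apply Finset.sum_le_sum
      intro k _
      rw [hqk k]
      have he : Real.exp (-(u * 2^k)) ≤ 1 := Real.exp_le_one_iff.2 (neg_nonpos.2 (by positivity))
      calc q^k * Real.exp (-(u * 2^k)) ≤ q^k * 1 := by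
            apply mul_le_mul_of_nonneg_left he (by positivity)
        _ = q^k := mul_one _
    have geo : ∑ k ∈ Finset.range (K+1), q^k = (q^(K+1) - 1)/(q-1) :=
      geom_sum_eq (ne_of_gt hq1) _
    have hqK : q^(K+1) ≤ 2 * u^(-a) := by
      have : q^(K+1) = q * q^K := by ring
      rw [this]
      have hqKa : q^K = ((2:ℝ)^K)^a := (hqk K).symm
      rw [hqKa]
      exact mul_le_mul hq2 hKa (by positivity) (by norm_num)
    calc ∑ k ∈ Finset.range (K+1), ((2:ℝ)^k)^a * Real.exp (-(u * 2^k))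
        ≤ (q^(K+1) - 1)/(q-1) := by rw [← geo]; exact step
      _ ≤ (2 * u^(-a))/(q-1) := by
          gcongr
          · linarith
      _ = 2/(q-1) * u^(-a) := by ring
  -- part 2
  set c : ℝ := 2 * Real.exp (-1) with hc
  have he2 : (2:ℝ) < Real.exp 1 := by
    have := Real.exp_one_gt_d9; linarith
  have hexpinv : Real.exp (-1) = (Real.exp 1)⁻¹ := Real.exp_neg 1
  have hc0 : 0 ≤ c := by positivity
  have hc1 : c < 1 := by
    rw [hc, hexpinv]
    rw [mul_inv_lt_iff₀ (by positivity)]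
    linarith
  have hgeo : ∀ m : ℕ, ∑ j ∈ Finset.range m, c^j ≤ (1-c)⁻¹ := by
    intro m
    calc ∑ j ∈ Finset.range m, c^j ≤ ∑' j : ℕ, c^j :=
        (summable_geometric_of_lt_one hc0 hc1).sum_le_tsum _ (fun j _ => by positivity)
      _ = (1-c)⁻¹ := tsum_geometric_of_lt_one hc0 hc1
  have part2 : ∑ k ∈ Finset.Ico (K+1) M, ((2:ℝ)^k)^a * Real.exp (-(u * 2^k))
      ≤ u^(-a) * (c * (1-c)⁻¹) := by
    rw [Finset.sum_Ico_eq_sum_range]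
    have hterm : ∀ j : ℕ, ((2:ℝ)^((K+1)+j))^a * Real.exp (-(u * 2^((K+1)+j)))
        ≤ u^(-a) * c * c^j := by
      intro j
      have hpow : ((2:ℝ)^((K+1)+j))^a ≤ u^(-a) * 2^(1+j) := by
        have hsplitpow : ((2:ℝ)^((K+1)+j)) = (2:ℝ)^K * (2:ℝ)^(1+j) := by
          rw [← pow_add]; ring_nf
        rw [hsplitpow, Real.mul_rpow (by positivity) (by positivity)]
        apply mul_le_mul hKa ?_ (by positivity) (by positivity)
        calc ((2:ℝ)^(1+j))^a ≤ ((2:ℝ)^(1+j))^(1:ℝ) :=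
            Real.rpow_le_rpow_of_exponent_le (one_le_pow₀ (by norm_num)) ha1
          _ = (2:ℝ)^(1+j) := Real.rpow_one _
      have hexp : Real.exp (-(u * 2^((K+1)+j))) ≤ Real.exp (-((j:ℝ)+1)) := by
        apply Real.exp_le_exp.2
        rw [neg_le_neg_iff]
        have h2j : ((j:ℝ)+1) ≤ (2:ℝ)^j := by
          have := j.lt_two_pow_self
          have h' : (j:ℝ) + 1 ≤ ((2^j : ℕ) : ℝ) := by exact_mod_cast this
          simpa [Nat.cast_pow] using h'
        calc ((j:ℝ)+1) ≤ (2:ℝ)^j := h2j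
          _ = 1 * (2:ℝ)^j := (one_mul _).symm
          _ ≤ (u * 2^(K+1)) * (2:ℝ)^j := by
              apply mul_le_mul_of_nonneg_right hu2K (by positivity)
          _ = u * 2^((K+1)+j) := by rw [pow_add]; ring
      have hexpj : Real.exp (-((j:ℝ)+1)) = Real.exp (-1) * (Real.exp (-1))^j := by
        rw [← Real.exp_nat_mul, ← Real.exp_add]
        congr 1; push_cast; ring
      calc ((2:ℝ)^((K+1)+j))^a * Real.exp (-(u * 2^((K+1)+j)))
          ≤ (u^(-a) * 2^(1+j)) * Real.exp (-((j:ℝ)+1)) := by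
            apply mul_le_mul hpow hexp (Real.exp_nonneg _) (by positivity)
        _ = u^(-a) * c * c^j := by
            rw [hexpj, hc, pow_add, mul_pow]; ring
    calc ∑ j ∈ Finset.range (M - (K+1)), ((2:ℝ)^((K+1)+j))^a * Real.exp (-(u * 2^((K+1)+j)))
        ≤ ∑ j ∈ Finset.range (M - (K+1)), u^(-a) * c * c^j :=
          Finset.sum_le_sum (fun j _ => hterm j)
      _ = u^(-a) * c * ∑ j ∈ Finset.range (M - (K+1)), c^j := by
          rw [Finset.mul_sum]
      _ ≤ u^(-a) * c * (1-c)⁻¹ := by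
          apply mul_le_mul_of_nonneg_left (hgeo _) (by positivity)
      _ = u^(-a) * (c * (1-c)⁻¹) := by ring
  have hc4 : c * (1-c)⁻¹ ≤ 4 := by
    rw [mul_inv_le_iff₀ (by linarith), hc, hexpinv]
    have : (Real.exp 1)⁻¹ ≤ (2.5:ℝ)⁻¹ := inv_anti₀ (by norm_num) (by have := Real.exp_one_gt_d9; norm_num at this ⊢; linarith)
    nlinarith
  calc ∑ k ∈ Finset.range N, ((2:ℝ)^k)^a * Real.exp (-(u * 2^k))
      ≤ ∑ k ∈ Finset.range M, ((2:ℝ)^k)^a * Real.exp (-(u * 2^k)) := hsub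
    _ = _ + _ := hsplit
    _ ≤ 2/(q-1) * u^(-a) + u^(-a) * (c * (1-c)⁻¹) := add_le_add part1 part2
    _ ≤ 2/(q-1) * u^(-a) + u^(-a) * 4 := by
        apply add_le_add_right
        apply mul_le_mul_of_nonneg_left hc4 (by positivity)
    _ = (2/(q-1) + 4) * u^(-a) := by ring

theorem stmt3 (β ε C : ℝ) (hβ : β ∈ Set.Ioo (0:ℝ) 1) (hε : ε ∈ Set.Ioo 0 β) (hC : 0 < C)
    (r : ℕ → ℝ) (hr : ∀ n, 0 ≤ r n) (hsum : Summable r)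
    (htail : ∀ n : ℕ, 1 ≤ n → (∑' j : ℕ, r (n + j)) ≤ C * (n : ℝ) ^ (-β)) :
    ∃ C' > 0, ∀ u : ℝ, 0 < u → u < 1 →
      (∑' n : ℕ, ((n + 1 : ℕ) : ℝ) ^ (1 + ε) * r (n + 1) * Real.exp (-u * (n + 1))) ≤
        C' * u ^ (β - ε - 1) := by
  obtain ⟨hβ0, hβ1⟩ := hβ
  obtain ⟨hε0, hεβ⟩ := hε
  set a : ℝ := 1 + ε - β with haa
  have ha : 0 < a := by simp only [haa]; linarith
  have ha1 : a ≤ 1 := by simp only [haa]; linarith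
  have hq1 : 1 < (2:ℝ)^a := by
    have : (2:ℝ)^(0:ℝ) < (2:ℝ)^a := (Real.rpow_lt_rpow_left_iff (by norm_num)).2 ha
    simpa using this
  set D : ℝ := 2/((2:ℝ)^a - 1) + 4 with hD
  have hD0 : 0 < D := by
    have : 0 < 2/((2:ℝ)^a - 1) := by
      apply div_pos (by norm_num); linarith
    simp only [hD]; linarith
  refine ⟨C * (2:ℝ)^(1+ε) * D, by positivity, ?_⟩
  intro u hu hu1
  have hua : u ^ (β - ε - 1) = u ^ (-a) := by
    congr 1; simp only [haa]; ring
  rw [hua]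
  set g : ℕ → ℝ := fun m => (m:ℝ)^(1+ε) * r m * Real.exp (-u * (m:ℝ)) with hg
  have hg0 : ∀ m, 0 ≤ g m := by
    intro m
    exact mul_nonneg (mul_nonneg (Real.rpow_nonneg (by positivity) _) (hr m))
      (Real.exp_nonneg _)
  have hblock : ∀ k : ℕ, ∑ m ∈ Finset.Ico (2^k) (2^(k+1)), g m
      ≤ C * (2:ℝ)^(1+ε) * (((2:ℝ)^k)^a * Real.exp (-(u * 2^k))) := by
    intro k
    set B : ℝ := ((2:ℝ)^(k+1))^((1:ℝ)+ε) * Real.exp (-(u * 2^k)) with hB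
    have hB0 : 0 ≤ B := by positivity
    have hgm : ∀ m ∈ Finset.Ico (2^k) (2^(k+1)), g m ≤ B * r m := by
      intro m hm
      simp only [Finset.mem_Ico] at hm
      have hm1 : (2:ℝ)^k ≤ (m:ℝ) := by exact_mod_cast hm.1
      have hm2 : (m:ℝ) ≤ (2:ℝ)^(k+1) := by exact_mod_cast hm.2.le
      have e1 : (m:ℝ)^((1:ℝ)+ε) ≤ ((2:ℝ)^(k+1))^((1:ℝ)+ε) :=
        Real.rpow_le_rpow (by positivity) hm2 (by linarith)
      have e2 : Real.exp (-u * (m:ℝ)) ≤ Real.exp (-(u * 2^k)) := by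
        apply Real.exp_le_exp.2
        have := mul_le_mul_of_nonneg_left hm1 hu.le
        linarith
      have key : (m:ℝ)^((1:ℝ)+ε) * Real.exp (-u * (m:ℝ)) ≤ B :=
        mul_le_mul e1 e2 (Real.exp_nonneg _) (by positivity)
      calc g m = ((m:ℝ)^((1:ℝ)+ε) * Real.exp (-u * (m:ℝ))) * r m := by
            simp only [hg]; ring
        _ ≤ B * r m := mul_le_mul_of_nonneg_right key (hr m)
    have hsumr : ∑ m ∈ Finset.Ico (2^k) (2^(k+1)), r m ≤ C * ((2^k : ℕ) : ℝ)^(-β) :=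
      (tailFin r hr hsum (2^k) _).trans (htail (2^k) Nat.one_le_two_pow)
    have hcast : ((2^k : ℕ) : ℝ) = (2:ℝ)^k := by push_cast; ring
    calc ∑ m ∈ Finset.Ico (2^k) (2^(k+1)), g m
        ≤ ∑ m ∈ Finset.Ico (2^k) (2^(k+1)), B * r m := Finset.sum_le_sum hgm
      _ = B * ∑ m ∈ Finset.Ico (2^k) (2^(k+1)), r m := by rw [Finset.mul_sum]
      _ ≤ B * (C * ((2^k : ℕ) : ℝ)^(-β)) := mul_le_mul_of_nonneg_left hsumr hB0
      _ = C * (2:ℝ)^(1+ε) * (((2:ℝ)^k)^a * Real.exp (-(u * 2^k))) := by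
          rw [hcast, hB]
          have e3 : ((2:ℝ)^(k+1))^((1:ℝ)+ε) = (2:ℝ)^((1:ℝ)+ε) * ((2:ℝ)^k)^((1:ℝ)+ε) := by
            rw [pow_succ, mul_comm ((2:ℝ)^k) 2,
              Real.mul_rpow (by norm_num) (by positivity)]
          have e4 : ((2:ℝ)^k)^((1:ℝ)+ε) * ((2:ℝ)^k)^(-β) = ((2:ℝ)^k)^a := by
            rw [← Real.rpow_add (by positivity)]
            congr 1
          rw [e3]
          calc (2:ℝ)^((1:ℝ)+ε) * ((2:ℝ)^k)^((1:ℝ)+ε) * Real.exp (-(u * 2^k))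
                * (C * ((2:ℝ)^k)^(-β))
              = C * (2:ℝ)^((1:ℝ)+ε) * ((((2:ℝ)^k)^((1:ℝ)+ε) * ((2:ℝ)^k)^(-β))
                * Real.exp (-(u * 2^k))) := by ring
            _ = C * (2:ℝ)^(1+ε) * (((2:ℝ)^k)^a * Real.exp (-(u * 2^k))) := by rw [e4]
  apply tsum_le_of_sum_le' (by positivity)
  intro s
  obtain ⟨n0, hn0⟩ := s.exists_nat_subset_range
  have hFg : ∀ n : ℕ, ((n + 1 : ℕ) : ℝ) ^ (1 + ε) * r (n + 1) * Real.exp (-u * (n + 1))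
      = g (n+1) := by
    intro n
    simp only [hg]
    push_cast
    ring
  calc ∑ n ∈ s, ((n + 1 : ℕ) : ℝ) ^ (1 + ε) * r (n + 1) * Real.exp (-u * (n + 1))
      = ∑ n ∈ s, g (n+1) := Finset.sum_congr rfl (fun n _ => hFg n)
    _ ≤ ∑ n ∈ Finset.range n0, g (n+1) :=
        Finset.sum_le_sum_of_subset_of_nonneg hn0 (fun n _ _ => hg0 _)
    _ = ∑ m ∈ Finset.Ico 1 (n0+1), g m := by
        rw [Finset.sum_Ico_eq_sum_range]
        simp only [Nat.add_sub_cancel]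
        exact Finset.sum_congr rfl (fun i _ => by rw [Nat.add_comm])
    _ ≤ ∑ m ∈ Finset.Ico 1 (2^(n0+1)), g m := by
        exact Finset.sum_le_sum_of_subset_of_nonneg
          (Finset.Ico_subset_Ico le_rfl (n0+1).lt_two_pow_self.le) (fun m _ _ => hg0 m)
    _ = ∑ k ∈ Finset.range (n0+1), ∑ m ∈ Finset.Ico (2^k) (2^(k+1)), g m := blocks g (n0+1)
    _ ≤ ∑ k ∈ Finset.range (n0+1),
          C * (2:ℝ)^(1+ε) * (((2:ℝ)^k)^a * Real.exp (-(u * 2^k))) :=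
        Finset.sum_le_sum (fun k _ => hblock k)
    _ = C * (2:ℝ)^(1+ε) * ∑ k ∈ Finset.range (n0+1),
          ((2:ℝ)^k)^a * Real.exp (-(u * 2^k)) := by rw [Finset.mul_sum]
    _ ≤ C * (2:ℝ)^(1+ε) * (D * u^(-a)) := by
        apply mul_le_mul_of_nonneg_left (step2 ha ha1 hu hu1 _) (by positivity)
    _ = C * (2:ℝ)^(1+ε) * D * u^(-a) := by ring
end

section
/- For the Stratmann–Vogt map T at λ = 1/2, with return domains of the first return map to V_1 having exactly C_n (the n-th Catalan number) branches of return time n, each of length 2|V_1|/4^{n}, the normalized Lebesgue measure μ on V_1 satisfies μ(ρ > n) = c_1·n^{-1/2} + c_2·n^{-3/2} + O(n^{-5/2}) for some constants c_1 > 0 and c_2 ∈ ℝ. -/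
open Real Filter Topology

noncomputable def W (n : ℕ) : ℝ := (Nat.centralBinom n : ℝ) / 4 ^ n

lemma stirling_W (n : ℕ) (hn : 0 < n) :
    W n * Real.sqrt n = Stirling.stirlingSeq (2*n) / (Stirling.stirlingSeq n)^2 := by
  have hn' : (0:ℝ) < n := by exact_mod_cast hn
  have hfac : (Nat.centralBinom n : ℝ) * n.factorial * n.factorial = ((2*n).factorial : ℝ) := by
    have := Nat.choose_mul_factorial_mul_factorial (show n ≤ 2*n by omega)
    rw [Nat.centralBinom_eq_two_mul_choose]
    push_cast [show 2*n - n = n by omega] at this ⊢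
    exact_mod_cast this
  unfold W Stirling.stirlingSeq
  push_cast
  have h4n : Real.sqrt (2*(2*(n:ℝ))) = 2 * Real.sqrt n := by
    rw [show 2*(2*(n:ℝ)) = 4 * n by ring, Real.sqrt_mul (by norm_num),
      show Real.sqrt 4 = 2 by rw [show (4:ℝ) = 2^2 by norm_num, Real.sqrt_sq (by norm_num)]]
  have hpow : ((2*(n:ℝ))/Real.exp 1)^(2*n) = 4^n * (((n:ℝ)/Real.exp 1)^n)^2 := by
    rw [← pow_mul, show (2*(n:ℝ))/Real.exp 1 = 2 * ((n:ℝ)/Real.exp 1) by ring, mul_pow,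
      show (4:ℝ) = 2^2 by norm_num, ← pow_mul]
    ring
  rw [h4n, hpow]
  have hs : Real.sqrt (n:ℝ) > 0 := Real.sqrt_pos.mpr hn'
  have hs2 : Real.sqrt (2*(n:ℝ)) > 0 := Real.sqrt_pos.mpr (by positivity)
  have he : ((n:ℝ)/Real.exp 1)^n > 0 := by positivity
  have hf : (0:ℝ) < n.factorial := by exact_mod_cast n.factorial_pos
  have hsq : Real.sqrt (2*(n:ℝ)) ^ 2 = 2*n := Real.sq_sqrt (by positivity)
  have hsn : Real.sqrt (n:ℝ) * Real.sqrt (n:ℝ) = (n:ℝ) := Real.mul_self_sqrt hn'.le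
  field_simp
  ring_nf
  have hfac2 : (Nat.centralBinom n : ℝ) * n.factorial * n.factorial = ((n*2).factorial : ℝ) := by
    rw [mul_comm n 2]; exact hfac
  have hsqq : Real.sqrt 2 ^ 2 = 2 := Real.sq_sqrt (by norm_num)
  have hsq' : Real.sqrt ((n:ℝ)*2)^2 = n*2 := Real.sq_sqrt (by positivity)
  linear_combination (2 * Real.sqrt (n:ℝ)^2) * hfac2 + (2 * ((n*2).factorial : ℝ)) * hsn -
    ((n*2).factorial : ℝ) * hsq'

lemma tendsto_W_sqrt :
    Tendsto (fun n : ℕ => W n * Real.sqrt n) atTop (𝓝 (Real.sqrt π)⁻¹) := by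
  have h := Stirling.tendsto_stirlingSeq_sqrt_pi
  have h2 : Tendsto (fun n : ℕ => 2*n) atTop atTop :=
    Filter.tendsto_atTop_atTop.mpr fun b => ⟨b, fun a ha => by omega⟩
  have hπ : (0:ℝ) < Real.sqrt π := Real.sqrt_pos.mpr Real.pi_pos
  have hmain : Tendsto (fun n : ℕ => Stirling.stirlingSeq (2*n) / (Stirling.stirlingSeq n)^2)
      atTop (𝓝 (Real.sqrt π / (Real.sqrt π)^2)) := (h.comp h2).div (h.pow 2) (by positivity)
  have he : Real.sqrt π / (Real.sqrt π)^2 = (Real.sqrt π)⁻¹ := by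
    rw [sq, div_mul_eq_div_div, div_self hπ.ne', one_div]
  rw [he] at hmain
  apply hmain.congr'
  filter_upwards [eventually_ge_atTop 1] with n hn
  exact (stirling_W n hn).symm

lemma tendsto_W_zero : Tendsto W atTop (𝓝 0) := by
  have h1 := tendsto_W_sqrt
  have hsq : Tendsto (fun n : ℕ => Real.sqrt n) atTop atTop := by
    apply tendsto_atTop_atTop.mpr
    intro b
    refine ⟨(Nat.ceil (max b 0))^2, fun a ha => ?_⟩
    have h2 : ((Nat.ceil (max b 0) : ℝ))^2 ≤ (a:ℝ) := by exact_mod_cast ha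
    calc b ≤ max b 0 := le_max_left _ _
    _ ≤ Nat.ceil (max b 0) := Nat.le_ceil _
    _ = Real.sqrt ((Nat.ceil (max b 0) : ℝ)^2) := (Real.sqrt_sq (by positivity)).symm
    _ ≤ Real.sqrt a := Real.sqrt_le_sqrt h2
  have h2 : Tendsto (fun n : ℕ => (Real.sqrt n)⁻¹) atTop (𝓝 0) :=
    hsq.inv_tendsto_atTop
  have h3 : Tendsto (fun n : ℕ => (W n * Real.sqrt n) * (Real.sqrt n)⁻¹) atTop
      (𝓝 ((Real.sqrt π)⁻¹ * 0)) := h1.mul h2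
  rw [mul_zero] at h3
  apply h3.congr'
  filter_upwards [eventually_ge_atTop 1] with n hn
  have hs : Real.sqrt (n:ℝ) ≠ 0 := by
    have : (0:ℝ) < n := by exact_mod_cast hn
    positivity
  field_simp

lemma W_pos (n : ℕ) : 0 < W n := by
  unfold W
  have := n.centralBinom_pos
  positivity

lemma W_succ (n : ℕ) : W (n+1) = W n * ((2*n+1)/(2*n+2)) := by
  have h' : ((n:ℝ)+1) * (Nat.centralBinom (n+1) : ℝ) = 2 * (2*n+1) * Nat.centralBinom n := by
    exact_mod_cast congrArg (Nat.cast : ℕ → ℝ) (Nat.succ_mul_centralBinom_succ n)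
  unfold W
  rw [pow_succ]
  have h4 : (4:ℝ)^n ≠ 0 := by positivity
  have hn : ((n:ℝ)+1) ≠ 0 := by positivity
  field_simp
  linear_combination 2 * h'

lemma term_eq (m : ℕ) : 2 * (catalan m : ℝ) * (4:ℝ)⁻¹ ^ m = 4 * W m - 4 * W (m+1) := by
  have hc : ((m:ℝ)+1) * (catalan m : ℝ) = Nat.centralBinom m := by
    exact_mod_cast congrArg (Nat.cast : ℕ → ℝ) (succ_mul_catalan_eq_centralBinom m)
  rw [W_succ]
  unfold W
  have h4 : (4:ℝ)^m ≠ 0 := by positivity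
  have hn : ((m:ℝ)+1) ≠ 0 := by positivity
  have hn2 : (2*(m:ℝ)+2) ≠ 0 := by positivity
  rw [inv_pow, inv_eq_one_div]
  field_simp
  linear_combination 4 * hc

lemma tsum_eq (n : ℕ) :
    (∑' k : ℕ, 2 * (catalan (n + 1 + k) : ℝ) * (4 : ℝ)⁻¹ ^ (n + 1 + k)) = 4 * W (n+1) := by
  have hs : HasSum (fun k : ℕ => 2 * (catalan (n + 1 + k) : ℝ) * (4 : ℝ)⁻¹ ^ (n + 1 + k))
      (4 * W (n+1)) := by
    rw [hasSum_iff_tendsto_nat_of_nonneg (fun k => by positivity)]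
    have key : ∀ K : ℕ, ∑ k ∈ Finset.range K,
        2 * (catalan (n + 1 + k) : ℝ) * (4 : ℝ)⁻¹ ^ (n + 1 + k)
        = 4 * W (n+1) - 4 * W (n+1+K) := by
      intro K
      have := Finset.sum_range_sub' (f := fun k => 4 * W (n+1+k)) K
      rw [← this]
      apply Finset.sum_congr rfl
      intro k _
      rw [term_eq (n+1+k), show n+1+(k+1) = n+1+k+1 by omega]
    simp only [key]
    have hW : Tendsto (fun K : ℕ => W (n+1+K)) atTop (𝓝 0) := by
      apply tendsto_W_zero.comp
      apply Filter.tendsto_atTop_atTop.mpr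
      intro b; exact ⟨b, fun a ha => by omega⟩
    have := (hW.const_mul (4:ℝ)).const_sub (4 * W (n+1))
    simpa using this
  exact hs.tsum_eq

noncomputable def Lf (n : ℕ) : ℝ := Real.log (W n * Real.sqrt n) + 1/(8*n)

lemma log_est {u : ℝ} (hu : 0 < u) : |Real.log (1+u) - u| ≤ u^2 := by
  have h1 : Real.log (1+u) ≤ u := by
    have := Real.log_le_sub_one_of_pos (show (0:ℝ) < 1+u by linarith)
    linarith
  have h3 := Real.log_le_sub_one_of_pos (show (0:ℝ) < (1+u)⁻¹ by positivity)
  rw [Real.log_inv] at h3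
  have h4 : (1+u)⁻¹ - 1 = -u/(1+u) := by field_simp; ring
  have h5 : u - u^2 ≤ u/(1+u) := by
    rw [le_div_iff₀ (by linarith)]; nlinarith
  have h2 : u - u^2 ≤ Real.log (1+u) := by
    rw [h4] at h3
    have : -Real.log (1+u) ≤ -u/(1+u) := h3
    have : u/(1+u) ≤ Real.log (1+u) := by
      have := neg_le_neg this
      simpa [neg_div] using this
    linarith
  rw [abs_le]
  constructor <;> nlinarith

lemma Lf_diff (n : ℕ) (hn : 1 ≤ n) :
    Lf (n+1) - Lf n =
      (Real.log (1 + 1/(4*(n:ℝ)*((n:ℝ)+1))) - 1/(4*(n:ℝ)*((n:ℝ)+1)))/2 := by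
  have hn' : (0:ℝ) < n := by exact_mod_cast hn
  have hWn := W_pos n
  have hWn1 := W_pos (n+1)
  have hsn : (0:ℝ) < Real.sqrt n := Real.sqrt_pos.mpr hn'
  have hsn1 : (0:ℝ) < Real.sqrt ((n:ℝ)+1) := Real.sqrt_pos.mpr (by linarith)
  set R : ℝ := (W (n+1) * Real.sqrt ((n:ℝ)+1)) / (W n * Real.sqrt n) with hR
  have hRpos : 0 < R := by positivity
  have hR2 : R^2 = 1 + 1/(4*(n:ℝ)*((n:ℝ)+1)) := by
    rw [hR, W_succ n, div_pow, mul_pow, mul_pow, mul_pow,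
      Real.sq_sqrt (show (0:ℝ) ≤ (n:ℝ)+1 by linarith), Real.sq_sqrt hn'.le]
    field_simp
    ring
  have hlogR : Real.log R = Real.log (1 + 1/(4*(n:ℝ)*((n:ℝ)+1)))/2 := by
    have h := Real.log_pow (n := 2) (x := R)
    rw [hR2] at h
    rw [h]; push_cast; ring
  have hstep : Lf (n+1) - Lf n = Real.log R + (1/(8*((n:ℝ)+1)) - 1/(8*(n:ℝ))) := by
    unfold Lf
    rw [hR, Real.log_div (by positivity) (by positivity)]
    push_cast
    ring
  rw [hstep, hlogR]
  have : 1/(8*((n:ℝ)+1)) - 1/(8*(n:ℝ)) = -(1/(4*(n:ℝ)*((n:ℝ)+1)))/2 := by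
    field_simp
    ring
  rw [this]
  ring

lemma Lf_step (n : ℕ) (hn : 1 ≤ n) :
    |Lf (n+1) - Lf n| ≤ (1/32) * (1/(n:ℝ)^2 - 1/((n:ℝ)+1)^2) := by
  have hn' : (0:ℝ) < n := by exact_mod_cast hn
  rw [Lf_diff n hn]
  have hu : (0:ℝ) < 1/(4*(n:ℝ)*((n:ℝ)+1)) := by positivity
  have h := log_est hu
  rw [abs_div, abs_of_nonneg (by norm_num : (0:ℝ) ≤ 2)]
  have hq : (1/(4*(n:ℝ)*((n:ℝ)+1)))^2 = 1/(16*(n:ℝ)^2*((n:ℝ)+1)^2) := by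
    field_simp; ring
  rw [div_le_iff₀ (by norm_num : (0:ℝ) < 2)]
  calc |Real.log (1 + 1/(4*(n:ℝ)*((n:ℝ)+1))) - 1/(4*(n:ℝ)*((n:ℝ)+1))|
      ≤ 1/(16*(n:ℝ)^2*((n:ℝ)+1)^2) := by rw [← hq]; exact h
    _ ≤ (1/32) * (1/(n:ℝ)^2 - 1/((n:ℝ)+1)^2) * 2 := by
        have key : (1/32) * (1/(n:ℝ)^2 - 1/((n:ℝ)+1)^2) * 2
            = (2*(n:ℝ)+1)/(16*(n:ℝ)^2*((n:ℝ)+1)^2) := by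
          field_simp; ring
        rw [key, div_le_div_iff₀ (by positivity) (by positivity)]
        have hD : (0:ℝ) < 16*(n:ℝ)^2*((n:ℝ)+1)^2 := by positivity
        nlinarith [hD, mul_le_mul_of_nonneg_right (show (1:ℝ) ≤ 2*(n:ℝ)+1 by linarith) hD.le]

lemma Lf_cauchy (m : ℕ) (hm : 1 ≤ m) : ∀ K, m ≤ K →
    |Lf K - Lf m| ≤ (1/32) * (1/(m:ℝ)^2 - 1/(K:ℝ)^2) := by
  intro K hK
  induction K, hK using Nat.le_induction with
  | base => simp
  | succ K hK ih =>
    have hK1 : 1 ≤ K := le_trans hm hK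
    have h1 := Lf_step K hK1
    have h2 := ih
    calc |Lf (K+1) - Lf m| ≤ |Lf (K+1) - Lf K| + |Lf K - Lf m| := abs_sub_le _ _ _
      _ ≤ (1/32) * (1/(K:ℝ)^2 - 1/((K:ℝ)+1)^2) + (1/32) * (1/(m:ℝ)^2 - 1/(K:ℝ)^2) := by
          exact add_le_add h1 h2
      _ = (1/32) * (1/(m:ℝ)^2 - 1/(((K:ℕ)+1:ℕ):ℝ)^2) := by push_cast; ring

lemma Lf_tendsto : Tendsto Lf atTop (𝓝 (Real.log (Real.sqrt π)⁻¹)) := by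
  have hπ : (Real.sqrt π)⁻¹ ≠ 0 := by
    have : (0:ℝ) < Real.sqrt π := Real.sqrt_pos.mpr Real.pi_pos
    positivity
  have h1 : Tendsto (fun n : ℕ => Real.log (W n * Real.sqrt n)) atTop
      (𝓝 (Real.log (Real.sqrt π)⁻¹)) := tendsto_W_sqrt.log hπ
  have h2 : Tendsto (fun n : ℕ => 1/(8*(n:ℝ))) atTop (𝓝 0) := by
    have := tendsto_natCast_atTop_atTop (R := ℝ)
    have h3 : Tendsto (fun n : ℕ => 8*(n:ℝ)) atTop atTop := this.const_mul_atTop (by norm_num)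
    have h4 := h3.inv_tendsto_atTop
    simp only [one_div]
    exact h4
  have := h1.add h2
  rw [add_zero] at this
  exact this

lemma Lf_close (m : ℕ) (hm : 1 ≤ m) :
    |Lf m - Real.log (Real.sqrt π)⁻¹| ≤ (1/32) * (1/(m:ℝ)^2) := by
  have h1 : Tendsto (fun K : ℕ => |Lf K - Lf m|) atTop
      (𝓝 |Real.log (Real.sqrt π)⁻¹ - Lf m|) := (Lf_tendsto.sub_const (Lf m)).abs
  rw [abs_sub_comm]
  apply le_of_tendsto h1
  filter_upwards [eventually_ge_atTop m] with K hK
  calc |Lf K - Lf m| ≤ (1/32) * (1/(m:ℝ)^2 - 1/(K:ℝ)^2) := Lf_cauchy m hm K hK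
    _ ≤ (1/32) * (1/(m:ℝ)^2) := by
        have hK' : (0:ℝ) < K := by
          have : (1:ℕ) ≤ K := le_trans hm hK
          exact_mod_cast Nat.lt_of_lt_of_le Nat.zero_lt_one this
        have : (0:ℝ) ≤ 1/(K:ℝ)^2 := by positivity
        nlinarith

lemma W_est (m : ℕ) (hm : 1 ≤ m) :
    |W m * Real.sqrt m * Real.sqrt π - (1 - 1/(8*(m:ℝ)))| ≤ 1/(8*(m:ℝ)^2) := by
  have hm' : (0:ℝ) < m := by exact_mod_cast hm
  have hm1 : (1:ℝ) ≤ m := by exact_mod_cast hm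
  have hsπ : (0:ℝ) < Real.sqrt π := Real.sqrt_pos.mpr Real.pi_pos
  have hW : (0:ℝ) < W m * Real.sqrt m := by
    have := W_pos m
    have : (0:ℝ) < Real.sqrt m := Real.sqrt_pos.mpr hm'
    positivity
  set δ : ℝ := Lf m - Real.log (Real.sqrt π)⁻¹ with hδdef
  have hδ : |δ| ≤ (1/32) * (1/(m:ℝ)^2) := Lf_close m hm
  set x : ℝ := δ - 1/(8*(m:ℝ)) with hxdef
  have hexp : W m * Real.sqrt m * Real.sqrt π = Real.exp x := by
    rw [hxdef, hδdef]
    unfold Lf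
    rw [Real.log_inv]
    push_cast
    rw [show Real.log (W m * Real.sqrt m) + 1/(8*(m:ℝ)) - -Real.log (Real.sqrt π) - 1/(8*(m:ℝ))
        = Real.log (W m * Real.sqrt m) + Real.log (Real.sqrt π) by ring,
      Real.exp_add, Real.exp_log hW, Real.exp_log hsπ]
  have hxb : |x| ≤ 5/(32*(m:ℝ)) := by
    rw [hxdef]
    have h8 : |1/(8*(m:ℝ))| = 1/(8*(m:ℝ)) := abs_of_pos (by positivity)
    have hmm : (1/32) * (1/(m:ℝ)^2) ≤ 1/(32*(m:ℝ)) := by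
      rw [show (1:ℝ)/32 * (1/(m:ℝ)^2) = 1/(32*(m:ℝ)^2) by ring,
        div_le_div_iff₀ (by positivity) (by positivity)]
      nlinarith
    calc |δ - 1/(8*(m:ℝ))| ≤ |δ| + |1/(8*(m:ℝ))| := abs_sub _ _
      _ ≤ (1/32) * (1/(m:ℝ)^2) + 1/(8*(m:ℝ)) := by rw [h8]; exact add_le_add hδ le_rfl
      _ ≤ 5/(32*(m:ℝ)) := by
          rw [show (5:ℝ)/(32*(m:ℝ)) = 1/(32*(m:ℝ)) + 4/(32*(m:ℝ)) by ring]
          apply add_le_add hmm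
          rw [div_le_div_iff₀ (by positivity) (by positivity)]
          nlinarith
  have hx1 : |x| ≤ 1 := by
    calc |x| ≤ 5/(32*(m:ℝ)) := hxb
      _ ≤ 1 := by rw [div_le_one (by positivity)]; nlinarith
  have hkey := Real.abs_exp_sub_one_sub_id_le hx1
  rw [hexp]
  calc |Real.exp x - (1 - 1/(8*(m:ℝ)))|
      = |(Real.exp x - 1 - x) + δ| := by rw [hxdef]; ring_nf
    _ ≤ |Real.exp x - 1 - x| + |δ| := abs_add_le _ _
    _ ≤ x^2 + (1/32) * (1/(m:ℝ)^2) := add_le_add hkey hδ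
    _ ≤ 1/(8*(m:ℝ)^2) := by
        have h1 : x^2 ≤ (5/(32*(m:ℝ)))^2 := by
          rw [← sq_abs x]
          exact pow_le_pow_left₀ (abs_nonneg x) hxb 2
        have hpos : (0:ℝ) ≤ 1/(m:ℝ)^2 := by positivity
        have h2 : (5/(32*(m:ℝ)))^2 = (25/1024) * (1/(m:ℝ)^2) := by field_simp; ring
        rw [h2] at h1
        rw [show (1:ℝ)/(8*(m:ℝ)^2) = (1/8)*(1/(m:ℝ)^2) by ring]
        nlinarith [h1, hpos]

set_option maxHeartbeats 1600000 in
lemma shift (n : ℕ) (hn : 1 ≤ n) :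
    |(1 - 1/(8*((n:ℝ)+1)))/Real.sqrt ((n:ℝ)+1)
      - (1/Real.sqrt n - (5/8)/(Real.sqrt n)^3)| ≤ 1/(Real.sqrt n)^5 := by
  have hn' : (1:ℝ) ≤ n := by exact_mod_cast hn
  set s : ℝ := Real.sqrt n with hsdef
  set t : ℝ := Real.sqrt ((n:ℝ)+1) with htdef
  have hs2 : s^2 = n := Real.sq_sqrt (by linarith)
  have ht2 : t^2 = (n:ℝ)+1 := Real.sq_sqrt (by linarith)
  have hs1 : (1:ℝ) ≤ s := by
    rw [hsdef]
    rw [show (1:ℝ) = Real.sqrt 1 by simp]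
    exact Real.sqrt_le_sqrt (by linarith)
  have hspos : (0:ℝ) < s := by linarith
  have htpos : (0:ℝ) < t := Real.sqrt_pos.mpr (by linarith)
  clear_value s t
  have hst : s < t := by nlinarith
  have hd : (t - s)*(t + s) = 1 := by nlinarith
  have hdle : (t - s)*(2*s) ≤ 1 := by nlinarith
  have hdge : 1 ≤ (t - s)*(2*t) := by nlinarith
  -- rewrite LHS
  have hrw : (1 - 1/(8*((n:ℝ)+1)))/t = 1/t - 1/(8*t^3) := by
    rw [← ht2]
    field_simp
  rw [hrw]
  have hB1 : 1/t - 1/s + 1/(2*s^3) = (2*s^3 - 2*s^2*t + t)/(2*s^3*t) := by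
    field_simp
  have hN1l : 0 ≤ 2*s^3 - 2*s^2*t + t := by nlinarith
  have hB1l : 0 ≤ 1/t - 1/s + 1/(2*s^3) := by
    rw [hB1]
    positivity
  have hB1u : 1/t - 1/s + 1/(2*s^3) ≤ 1/(2*s^5) := by
    rw [hB1, div_le_div_iff₀ (by positivity) (by positivity)]
    nlinarith [mul_le_mul_of_nonneg_right hdle (by positivity : (0:ℝ) ≤ s^4),
      mul_le_mul_of_nonneg_right hdge (by positivity : (0:ℝ) ≤ s^4), sq_nonneg (s-t), sq_nonneg s]
  have hB2l : 0 ≤ 1/(8*s^3) - 1/(8*t^3) := by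
    have h3 : 8*s^3 ≤ 8*t^3 := by nlinarith
    have := one_div_le_one_div_of_le (by positivity : (0:ℝ) < 8*s^3) h3
    linarith
  have hB2 : 1/(8*s^3) - 1/(8*t^3) = (t^3 - s^3)/(8*s^3*t^3) := by
    field_simp
  have hB2u : 1/(8*s^3) - 1/(8*t^3) ≤ 3/(16*s^5) := by
    have hq : (0:ℝ) < t^2 + t*s + s^2 :=
      add_pos (add_pos (pow_pos htpos 2) (mul_pos htpos hspos)) (pow_pos hspos 2)
    have key : 2*s^2*(t^3 - s^3) ≤ 3*t^3 := by
      have h5 : 2*s^2*(t^3-s^3) = ((t-s)*(2*s))*(s*(t^2+t*s+s^2)) := by ring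
      rw [h5]
      calc ((t-s)*(2*s))*(s*(t^2+t*s+s^2)) ≤ 1*(s*(t^2+t*s+s^2)) :=
            mul_le_mul_of_nonneg_right hdle (mul_nonneg hspos.le hq.le)
        _ ≤ 1*(s*(3*t^2)) := by nlinarith
        _ = 3*s*t^2 := by ring
        _ ≤ 3*t*t^2 := by nlinarith
        _ = 3*t^3 := by ring
    rw [hB2, div_le_div_iff₀ (by positivity) (by positivity)]
    calc (t^3-s^3)*(16*s^5) = 8*s^3*(2*s^2*(t^3-s^3)) := by ring
      _ ≤ 8*s^3*(3*t^3) := by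
          apply mul_le_mul_of_nonneg_left key (by positivity)
      _ = 3*(8*s^3*t^3) := by ring
  have hcomb : 1/t - 1/(8*t^3) - (1/s - (5/8)/s^3)
      = (1/t - 1/s + 1/(2*s^3)) + (1/(8*s^3) - 1/(8*t^3)) := by
    field_simp
    ring
  rw [hcomb, abs_of_nonneg (by linarith)]
  have hs5 : 1/(2*s^5) + 3/(16*s^5) ≤ 1/s^5 := by
    rw [show (1:ℝ)/(2*s^5) = (1/2)*(1/s^5) by ring, show (3:ℝ)/(16*s^5) = (3/16)*(1/s^5) by ring]
    have : (0:ℝ) ≤ 1/s^5 := by positivity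
    nlinarith
  linarith

lemma rpow_half_nat (n : ℕ) (k : ℕ) (hn : 1 ≤ n) :
    (n:ℝ) ^ (-((k:ℝ)/2)) = 1/(Real.sqrt n)^k := by
  have hn' : (0:ℝ) < n := by exact_mod_cast hn
  rw [Real.rpow_neg hn'.le, one_div]
  congr 1
  rw [show ((k:ℝ)/2) = (1/2)*(k:ℝ) by ring, Real.rpow_mul hn'.le, ← Real.sqrt_eq_rpow,
    Real.rpow_natCast]

theorem stmt12 :
    ∃ c₂ : ℝ, ∃ C > 0, ∃ N : ℕ, ∀ n : ℕ, N ≤ n →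
      |(∑' k : ℕ, 2 * (catalan (n + 1 + k) : ℝ) * (4 : ℝ)⁻¹ ^ (n + 1 + k)) -
          (4 / Real.sqrt Real.pi * (n : ℝ) ^ (-(1/2) : ℝ) +
            c₂ * (n : ℝ) ^ (-(3/2) : ℝ))| ≤
        C * (n : ℝ) ^ (-(5/2) : ℝ) := by
  refine ⟨-5/(2*Real.sqrt π), 5, by norm_num, 1, fun n hn => ?_⟩
  have hn' : (0:ℝ) < n := by exact_mod_cast hn
  have h12 : (n:ℝ) ^ (-(1/2) : ℝ) = 1/(Real.sqrt n)^1 := by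
    rw [show (-(1/2) : ℝ) = -(((1:ℕ):ℝ)/2) by norm_num]; exact rpow_half_nat n 1 hn
  have h32 : (n:ℝ) ^ (-(3/2) : ℝ) = 1/(Real.sqrt n)^3 := by
    rw [show (-(3/2) : ℝ) = -(((3:ℕ):ℝ)/2) by norm_num]; exact rpow_half_nat n 3 hn
  have h52 : (n:ℝ) ^ (-(5/2) : ℝ) = 1/(Real.sqrt n)^5 := by
    rw [show (-(5/2) : ℝ) = -(((5:ℕ):ℝ)/2) by norm_num]; exact rpow_half_nat n 5 hn
  rw [tsum_eq n, h12, h32, h52]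
  set s : ℝ := Real.sqrt n with hsdef
  have hs1 : (1:ℝ) ≤ s := by
    rw [hsdef, show (1:ℝ) = Real.sqrt 1 by simp]
    exact Real.sqrt_le_sqrt (by exact_mod_cast hn)
  have hspos : (0:ℝ) < s := by linarith
  have hπ1 : (1:ℝ) ≤ Real.sqrt π := by
    rw [show (1:ℝ) = Real.sqrt 1 by simp]
    exact Real.sqrt_le_sqrt (by linarith [Real.pi_gt_three])
  have hπpos : (0:ℝ) < Real.sqrt π := by linarith
  set t : ℝ := Real.sqrt ((n:ℝ)+1) with htdef
  have htpos : (0:ℝ) < t := Real.sqrt_pos.mpr (by linarith)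
  have hts : s ≤ t := Real.sqrt_le_sqrt (by linarith)
  -- W_est at n+1
  have est := W_est (n+1) (by omega)
  have hcast : ((n+1:ℕ):ℝ) = (n:ℝ)+1 := by push_cast; ring
  rw [hcast] at est
  -- est : |W (n+1) * t * √π - (1 - 1/(8*((n:ℝ)+1)))| ≤ 1/(8*((n:ℝ)+1)^2)
  have hsh := shift n hn
  -- combine
  have key1 : |4 * W (n+1) - 4*(1 - 1/(8*((n:ℝ)+1)))/(t*Real.sqrt π)| ≤ (1/2) * (1/s^5) := by
    have hD : (0:ℝ) < t * Real.sqrt π := by positivity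
    have heq : 4 * W (n+1) - 4*(1 - 1/(8*((n:ℝ)+1)))/(t*Real.sqrt π)
        = 4*(W (n+1) * t * Real.sqrt π - (1 - 1/(8*((n:ℝ)+1))))/(t*Real.sqrt π) := by
      field_simp
    rw [heq, abs_div, abs_of_pos hD, abs_mul, abs_of_nonneg (by norm_num : (0:ℝ) ≤ 4),
      div_le_iff₀ hD]
    have hsn : s^2 = (n:ℝ) := Real.sq_sqrt hn'.le
    have hle1 : 4 * (1/(8*((n:ℝ)+1)^2)) ≤ 1/(2*(n:ℝ)^2) := by
      rw [show 4*(1/(8*((n:ℝ)+1)^2)) = 1/(2*((n:ℝ)+1)^2) by field_simp; ring]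
      gcongr
      all_goals nlinarith
    have heq2 : (1/2) * (1/s^5) * s = 1/(2*(n:ℝ)^2) := by
      rw [show (1:ℝ)/2 * (1/s^5) * s = 1/(2*(s^2)^2) by field_simp, hsn]
    have hst2 : s ≤ t * Real.sqrt π := by
      calc s ≤ t := hts
        _ = t * 1 := (mul_one t).symm
        _ ≤ t * Real.sqrt π := mul_le_mul_of_nonneg_left hπ1 htpos.le
    calc 4 * |W (n+1) * t * Real.sqrt π - (1 - 1/(8*((n:ℝ)+1)))|
        ≤ 4 * (1/(8*((n:ℝ)+1)^2)) := by linarith [est]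
      _ ≤ 1/(2*(n:ℝ)^2) := hle1
      _ = (1/2) * (1/s^5) * s := heq2.symm
      _ ≤ (1/2) * (1/s^5) * (t*Real.sqrt π) := mul_le_mul_of_nonneg_left hst2 (by positivity)
  -- second piece: multiply shift by 4/sqrt pi
  have key2 : |4*(1 - 1/(8*((n:ℝ)+1)))/(t*Real.sqrt π)
      - (4/Real.sqrt π * (1/s^1) + (-5/(2*Real.sqrt π)) * (1/s^3))| ≤ 4 * (1/s^5) := by
    have heq3 : 4*(1 - 1/(8*((n:ℝ)+1)))/(t*Real.sqrt π)
        - (4/Real.sqrt π * (1/s^1) + (-5/(2*Real.sqrt π)) * (1/s^3))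
        = (4/Real.sqrt π) * ((1 - 1/(8*((n:ℝ)+1)))/t - (1/s - (5/8)/s^3)) := by
      field_simp
      ring
    rw [heq3, abs_mul, abs_of_pos (by positivity : (0:ℝ) < 4/Real.sqrt π)]
    calc 4/Real.sqrt π * |(1 - 1/(8*((n:ℝ)+1)))/t - (1/s - (5/8)/s^3)|
        ≤ 4/Real.sqrt π * (1/s^5) := by
          apply mul_le_mul_of_nonneg_left hsh (by positivity)
      _ ≤ 4 * (1/s^5) := by
          apply mul_le_mul_of_nonneg_right _ (by positivity)
          rw [div_le_iff₀ hπpos]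
          nlinarith
  calc |4 * W (n+1) - (4/Real.sqrt π * (1/s^1) + (-5/(2*Real.sqrt π)) * (1/s^3))|
      ≤ |4 * W (n+1) - 4*(1 - 1/(8*((n:ℝ)+1)))/(t*Real.sqrt π)|
        + |4*(1 - 1/(8*((n:ℝ)+1)))/(t*Real.sqrt π)
            - (4/Real.sqrt π * (1/s^1) + (-5/(2*Real.sqrt π)) * (1/s^3))| := by
          apply abs_sub_le
    _ ≤ (1/2) * (1/s^5) + 4 * (1/s^5) := add_le_add key1 key2
    _ ≤ 5 * (1/s^5) := by nlinarith [show (0:ℝ) ≤ 1/s^5 by positivity]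
end
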